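/- Let n ≥ 2 be an integer, 0 < α < n, and 1 < p < q < ∞ with α/n = 1/p − 1/q. There exists a constant C = C(n, p, q, C₀) such that for every nonnegative f ∈ L^p(ℝ^{n+1}) with ‖f‖_{L^p} > 0, every integer ℓ with 0 ≤ ℓ ≤ η, every j ∈ ℤ, and every (x,t) ∈ ℝ^{n+1} at which 0 < (M_η f)(x,t) < ∞ and θ_ℓ(x,t) > 0, one has (Δ_{ℓj} I_α f)(x,t) ≤ C 2^{−|j − ρ_ℓ(x,t)| (n+1) min{α/n, 1/q}} θ_ℓ(x,t)^{1/p − 1/q} (M_η f)(x,t)^{p/q} ‖f‖_{L^p(ℝ^{n+1})}^{1 − p/q}. -/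

import Mathlib

open MeasureTheory ENNReal NNReal

noncomputable section

/-- `ℝ^{n+1}` as `ℝ^n × ℝ`. -/
abbrev Pt (n : ℕ) := EuclideanSpace ℝ (Fin n) × ℝ

/-- The open light cone `Λ = {(y,s) : |s| > |y|}`. -/
def lightCone (n : ℕ) : Set (Pt n) := {p | ‖p.1‖ < |p.2|}

/-- The integrand `f(x−y, t−s) (|s|+|y|)^{α−n} (|s|−|y|)^{α/n−1}`. -/
def ker (n : ℕ) (α : ℝ) (f : Pt n → ℝ) (z p : Pt n) : ℝ≥0∞ :=
  ENNReal.ofReal (f (z.1 - p.1, z.2 - p.2)) *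
    ENNReal.ofReal ((|p.2| + ‖p.1‖) ^ (α - n) * (|p.2| - ‖p.1‖) ^ (α / n - 1))

/-- The light-cone fractional integral `I_α f`. -/
def Iop (n : ℕ) (α : ℝ) (f : Pt n → ℝ) (z : Pt n) : ℝ≥0∞ :=
  ∫⁻ p in lightCone n, ker n α f z p

/-- The shifted cone shell `Λ_{ℓj}(x,t)`. -/
def shellAt (n : ℕ) (ℓ j : ℤ) (c : Pt n) : Set (Pt n) :=
  {p | (2:ℝ) ^ j ≤ |p.2 - c.2| + ‖p.1 - c.1‖ ∧ |p.2 - c.2| + ‖p.1 - c.1‖ < (2:ℝ) ^ (j + 1) ∧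
       (2:ℝ) ^ (j - ℓ) ≤ |p.2 - c.2| - ‖p.1 - c.1‖ ∧
       |p.2 - c.2| - ‖p.1 - c.1‖ < (2:ℝ) ^ (j - ℓ + 1)}

/-- The dyadic enlargement `Λ*_{ℓj}(x,t)`. -/
def shellStarAt (n : ℕ) (ℓ j : ℤ) (c : Pt n) : Set (Pt n) :=
  {p | (2:ℝ) ^ (j - 3) ≤ |p.2 - c.2| + ‖p.1 - c.1‖ ∧
       |p.2 - c.2| + ‖p.1 - c.1‖ < (2:ℝ) ^ (j + 3) ∧
       (2:ℝ) ^ (j - ℓ - 3) ≤ |p.2 - c.2| - ‖p.1 - c.1‖ ∧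
       |p.2 - c.2| - ‖p.1 - c.1‖ < (2:ℝ) ^ (j - ℓ + 3)}

/-- The cone shell `Λ_{ℓj}` (centered at the origin). -/
def shell (n : ℕ) (ℓ j : ℤ) : Set (Pt n) := shellAt n ℓ j 0

/-- The discrete dyadic cone `Λ_ℓ = ⋃_j Λ_{ℓj}`. -/
def Lam (n : ℕ) (ℓ : ℤ) : Set (Pt n) := ⋃ j : ℤ, shell n ℓ j

/-- The partial operator `Δ_{ℓj} I_α f`. -/
def Dlj (n : ℕ) (α : ℝ) (ℓ j : ℤ) (f : Pt n → ℝ) (z : Pt n) : ℝ≥0∞ :=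
  ∫⁻ p in shell n ℓ j, ker n α f z p

/-- The partial operator `Δ_ℓ I_α f`. -/
def Dl (n : ℕ) (α : ℝ) (ℓ : ℤ) (f : Pt n → ℝ) (z : Pt n) : ℝ≥0∞ :=
  ∫⁻ p in Lam n ℓ, ker n α f z p

/-- `θ_ℓ(x,t) = ‖f‖_p^{−p} ∬_{Λ_ℓ} f(x−y,t−s)^p dy ds`. -/
def theta (n : ℕ) (p : ℝ) (f : Pt n → ℝ) (ℓ : ℤ) (z : Pt n) : ℝ≥0∞ :=
  (∫⁻ w in Lam n ℓ, ENNReal.ofReal (f (z.1 - w.1, z.2 - w.2)) ^ p) /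
    eLpNorm f (ENNReal.ofReal p) volume ^ p

/-- The cone of directions `Γ^ν_η` with central direction `e`. -/
def coneDir (n η : ℕ) (e : EuclideanSpace ℝ (Fin n)) : Set (EuclideanSpace ℝ (Fin n)) :=
  {y | y ≠ 0 ∧ ‖(‖y‖⁻¹ • y) - e‖ ≤ 4 * (2:ℝ) ^ (-(η:ℝ))}

/-- The directional maximal operator `M^ν_η`. -/
def Mnu (n η : ℕ) (e : EuclideanSpace ℝ (Fin n)) (f : Pt n → ℝ) (z : Pt n) : ℝ≥0∞ :=
  ⨆ (ℓ : ℕ) (_ : ℓ ≤ η) (j : ℤ),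
    (ENNReal.ofReal ((2:ℝ) ^ j * (2:ℝ) ^ (j - (ℓ:ℤ)) * (2:ℝ) ^ ((j - (η:ℤ)) * ((n:ℤ) - 1))))⁻¹ *
      ∫⁻ p in {p : Pt n | p ∈ shell n ℓ j ∧ p.1 ∈ coneDir n η e},
        ENNReal.ofReal (f (z.1 - p.1, z.2 - p.2))

/-- The averaged maximal operator `M_η`. -/
def Meta (n η : ℕ) {ι : Type} [Fintype ι] (y : ι → EuclideanSpace ℝ (Fin n)) (f : Pt n → ℝ)
    (z : Pt n) : ℝ≥0∞ :=
  (ENNReal.ofReal ((2:ℝ) ^ ((η:ℤ) * ((n:ℤ) - 1))))⁻¹ * ∑ ν, Mnu n η (y ν) f z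

/-- `Ω^α(x,t) = (|t|+|x|)^{α−n} (|t|−|x|)^{α/n−1}`. -/
def Om (n : ℕ) (α : ℝ) (p : Pt n) : ℝ≥0∞ :=
  ENNReal.ofReal ((|p.2| + ‖p.1‖) ^ (α - n) * (|p.2| - ‖p.1‖) ^ (α / n - 1))


namespace Stmt11Aux

open Metric Set

lemma mem_shell_iff {n : ℕ} {ℓ j : ℤ} {p : Pt n} :
    p ∈ shell n ℓ j ↔ (2:ℝ) ^ j ≤ |p.2| + ‖p.1‖ ∧ |p.2| + ‖p.1‖ < (2:ℝ) ^ (j + 1) ∧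
      (2:ℝ) ^ (j - ℓ) ≤ |p.2| - ‖p.1‖ ∧ |p.2| - ‖p.1‖ < (2:ℝ) ^ (j - ℓ + 1) := by
  simp [shell, shellAt]

lemma measurableSet_shell (n : ℕ) (ℓ j : ℤ) : MeasurableSet (shell n ℓ j) := by
  have h1 : Measurable fun p : Pt n => |p.2| + ‖p.1‖ := by fun_prop
  have h2 : Measurable fun p : Pt n => |p.2| - ‖p.1‖ := by fun_prop
  have heq : shell n ℓ j =
      (fun p : Pt n => |p.2| + ‖p.1‖) ⁻¹' (Set.Ico ((2:ℝ)^j) ((2:ℝ)^(j+1))) ∩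
      (fun p : Pt n => |p.2| - ‖p.1‖) ⁻¹' (Set.Ico ((2:ℝ)^(j-ℓ)) ((2:ℝ)^(j-ℓ+1))) := by
    ext p
    simp only [mem_shell_iff, Set.mem_inter_iff, Set.mem_preimage, Set.mem_Ico]
    tauto
  rw [heq]
  exact (h1 measurableSet_Ico).inter (h2 measurableSet_Ico)

lemma shell_subset_Lam (n : ℕ) (ℓ j : ℤ) : shell n ℓ j ⊆ Lam n ℓ :=
  Set.subset_iUnion (fun j => shell n ℓ j) j

lemma norm_fst_lt_of_mem_shell {n : ℕ} {ℓ j : ℤ} (hℓ : 0 ≤ ℓ) {p : Pt n}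
    (hp : p ∈ shell n ℓ j) : ‖p.1‖ < (2:ℝ)^j := by
  rw [mem_shell_iff] at hp
  obtain ⟨-, h2, h3, -⟩ := hp
  have hpos : (0:ℝ) < (2:ℝ)^(j-ℓ) := by positivity
  have h2' : (2:ℝ)^(j+1) = 2 * (2:ℝ)^j := by
    rw [zpow_add_one₀ (two_ne_zero)]; ring
  nlinarith

lemma slice_vol (n : ℕ) (y : EuclideanSpace ℝ (Fin n)) (ℓ j : ℤ) :
    volume {s : ℝ | (y, s) ∈ shell n ℓ j} ≤ ENNReal.ofReal ((2:ℝ)^(j-ℓ+1)) := by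
  set a : ℝ := (2:ℝ)^(j-ℓ) + ‖y‖ with ha
  set b : ℝ := (2:ℝ)^(j-ℓ+1) + ‖y‖ with hb
  have hba : b - a = (2:ℝ)^(j-ℓ) := by
    rw [ha, hb, zpow_add_one₀ (two_ne_zero)]; ring
  have hsub : {s : ℝ | (y, s) ∈ shell n ℓ j} ⊆ Set.Icc (-b) (-a) ∪ Set.Icc a b := by
    intro s hs
    rw [Set.mem_setOf_eq, mem_shell_iff] at hs
    obtain ⟨-, -, h3, h4⟩ := hs
    simp only at h3 h4
    have haa : a ≤ |s| := by rw [ha]; linarith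
    have hbb : |s| ≤ b := by rw [hb]; linarith
    rcases abs_cases s with ⟨he, -⟩ | ⟨he, -⟩
    · right; constructor <;> linarith
    · left; constructor <;> linarith
  calc volume {s : ℝ | (y, s) ∈ shell n ℓ j} ≤ volume (Set.Icc (-b) (-a) ∪ Set.Icc a b) :=
        measure_mono hsub
    _ ≤ volume (Set.Icc (-b) (-a)) + volume (Set.Icc a b) := measure_union_le _ _
    _ = ENNReal.ofReal (b - a) + ENNReal.ofReal (b - a) := by
        rw [Real.volume_Icc, Real.volume_Icc]
        congr 1
        ring_nf
    _ ≤ ENNReal.ofReal ((2:ℝ)^(j-ℓ+1)) := by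
        rw [← ENNReal.ofReal_add (by rw [hba]; positivity) (by rw [hba]; positivity), hba,
          zpow_add_one₀ (two_ne_zero)]
        apply ENNReal.ofReal_le_ofReal
        ring_nf
        exact le_rfl

lemma volume_shell_le (n : ℕ) (hn : 1 ≤ n) (ℓ j : ℤ) (hℓ : 0 ≤ ℓ) :
    volume (shell n ℓ j) ≤
      volume (ball (0:EuclideanSpace ℝ (Fin n)) 1) *
        ENNReal.ofReal ((2:ℝ)^(j*n) * (2:ℝ)^(j-ℓ+1)) := by
  haveI : Nonempty (Fin n) := ⟨⟨0, by omega⟩⟩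
  haveI : Nontrivial (EuclideanSpace ℝ (Fin n)) := inferInstance
  have hmeas := measurableSet_shell n ℓ j
  have hprod : (volume : Measure (Pt n)) = (volume : Measure (EuclideanSpace ℝ (Fin n))).prod
      (volume : Measure ℝ) := Measure.volume_eq_prod _ _
  rw [hprod, Measure.prod_apply hmeas]
  have hbd : ∀ y : EuclideanSpace ℝ (Fin n),
      volume (Prod.mk y ⁻¹' shell n ℓ j) ≤
        (ball (0:EuclideanSpace ℝ (Fin n)) ((2:ℝ)^j)).indicator
          (fun _ => ENNReal.ofReal ((2:ℝ)^(j-ℓ+1))) y := by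
    intro y
    by_cases hy : y ∈ ball (0:EuclideanSpace ℝ (Fin n)) ((2:ℝ)^j)
    · rw [Set.indicator_of_mem hy]
      exact slice_vol n y ℓ j
    · rw [Set.indicator_of_notMem hy]
      have : Prod.mk y ⁻¹' shell n ℓ j = ∅ := by
        ext s
        simp only [Set.mem_preimage, Set.mem_empty_iff_false, iff_false]
        intro hs
        exact hy (by simpa [mem_ball, dist_eq_norm] using norm_fst_lt_of_mem_shell hℓ hs)
      simp [this]
  calc (∫⁻ y, volume (Prod.mk y ⁻¹' shell n ℓ j)) ≤
      ∫⁻ y, (ball (0:EuclideanSpace ℝ (Fin n)) ((2:ℝ)^j)).indicator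
          (fun _ => ENNReal.ofReal ((2:ℝ)^(j-ℓ+1))) y := lintegral_mono hbd
    _ = ENNReal.ofReal ((2:ℝ)^(j-ℓ+1)) * volume (ball (0:EuclideanSpace ℝ (Fin n)) ((2:ℝ)^j)) := by
        rw [lintegral_indicator measurableSet_ball]
        simp [Measure.restrict_apply, mul_comm]
    _ ≤ volume (ball (0:EuclideanSpace ℝ (Fin n)) 1) *
        ENNReal.ofReal ((2:ℝ)^(j*n) * (2:ℝ)^(j-ℓ+1)) := by
        rw [Measure.addHaar_ball _ _ (by positivity : (0:ℝ) ≤ (2:ℝ)^j)]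
        rw [finrank_euclideanSpace_fin]
        have h2 : ((2:ℝ)^j)^n = (2:ℝ)^(j*n) := by
          rw [← zpow_natCast ((2:ℝ)^j) n, ← zpow_mul]
        rw [h2, ENNReal.ofReal_mul (by positivity)]
        ring_nf
        exact le_rfl

lemma holder_mu {X : Type*} [MeasurableSpace X] (μ : Measure X) {p : ℝ} (hp : 1 < p)
    {g : X → ℝ≥0∞} (hg : AEMeasurable g μ) :
    ∫⁻ w, g w ∂μ ≤ (∫⁻ w, g w ^ p ∂μ) ^ (1/p) * (μ Set.univ) ^ (1 - 1/p) := by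
  have hpq : p.HolderConjugate (Real.conjExponent p) := Real.HolderConjugate.conjExponent hp
  have key := ENNReal.lintegral_mul_le_Lp_mul_Lq μ hpq hg (aemeasurable_const (b := (1:ℝ≥0∞)))
  have hq : 1 / Real.conjExponent p = 1 - 1/p := by
    rw [one_div, one_div, ← hpq.one_sub_inv]
  simp only [Pi.mul_apply, mul_one, ENNReal.one_rpow, lintegral_const, one_mul] at key
  rwa [hq] at key

lemma holder_set (n : ℕ) {p : ℝ} (hp : 1 < p) (s : Set (Pt n))
    {g : Pt n → ℝ≥0∞} (hg : AEMeasurable g (volume.restrict s)) :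
    ∫⁻ w in s, g w ≤ (∫⁻ w in s, g w ^ p) ^ (1/p) * (volume.restrict s Set.univ) ^ (1 - 1/p) :=
  holder_mu (volume.restrict s) hp hg

lemma lintegral_shell_le_sum (n η : ℕ) (hn : 1 ≤ n) {ι : Type} [Fintype ι]
    (y : ι → EuclideanSpace ℝ (Fin n))
    (hcov : ∀ w : EuclideanSpace ℝ (Fin n), w ≠ 0 → ∃ ν, w ∈ coneDir n η (y ν))
    (ℓ j : ℤ) (g : Pt n → ℝ≥0∞) :
    ∫⁻ p in shell n ℓ j, g p ≤
      ∑ ν, ∫⁻ p in {p : Pt n | p ∈ shell n ℓ j ∧ p.1 ∈ coneDir n η (y ν)}, g p := by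
  haveI : Nonempty (Fin n) := ⟨⟨0, by omega⟩⟩
  haveI : Nontrivial (EuclideanSpace ℝ (Fin n)) := inferInstance
  set N : Set (Pt n) := {p : Pt n | p.1 = 0} with hNdef
  have hN : volume N = 0 := by
    have hNeq : N = ({(0 : EuclideanSpace ℝ (Fin n))} : Set _) ×ˢ (Set.univ : Set ℝ) := by
      ext p
      simp only [hNdef, Set.mem_setOf_eq, Set.mem_prod, Set.mem_singleton_iff, Set.mem_univ,
        and_true]
    rw [hNeq, Measure.volume_eq_prod, Measure.prod_prod]
    simp [measure_singleton]
  have hsub : shell n ℓ j ⊆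
      (⋃ ν, {p : Pt n | p ∈ shell n ℓ j ∧ p.1 ∈ coneDir n η (y ν)}) ∪ N := by
    intro p hp
    by_cases h0 : p.1 = 0
    · right; exact h0
    · obtain ⟨ν, hν⟩ := hcov p.1 h0
      left; exact Set.mem_iUnion.2 ⟨ν, hp, hν⟩
  calc ∫⁻ p in shell n ℓ j, g p
      ≤ ∫⁻ p in (⋃ ν, {p : Pt n | p ∈ shell n ℓ j ∧ p.1 ∈ coneDir n η (y ν)}) ∪ N, g p :=
        lintegral_mono_set hsub
    _ ≤ (∫⁻ p in ⋃ ν, {p : Pt n | p ∈ shell n ℓ j ∧ p.1 ∈ coneDir n η (y ν)}, g p) +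
          ∫⁻ p in N, g p := lintegral_union_le _ _ _
    _ = ∫⁻ p in ⋃ ν, {p : Pt n | p ∈ shell n ℓ j ∧ p.1 ∈ coneDir n η (y ν)}, g p := by
        rw [setLIntegral_measure_zero _ _ hN, add_zero]
    _ ≤ ∑' ν, ∫⁻ p in {p : Pt n | p ∈ shell n ℓ j ∧ p.1 ∈ coneDir n η (y ν)}, g p :=
        lintegral_iUnion_le _ _
    _ = ∑ ν, ∫⁻ p in {p : Pt n | p ∈ shell n ℓ j ∧ p.1 ∈ coneDir n η (y ν)}, g p :=
        tsum_fintype _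

lemma sum_cone_integrals_le (n η : ℕ) {ι : Type} [Fintype ι]
    (y : ι → EuclideanSpace ℝ (Fin n)) (f : Pt n → ℝ) (z : Pt n)
    (ℓ : ℕ) (hℓ : ℓ ≤ η) (j : ℤ) :
    ∑ ν, (∫⁻ p in {p : Pt n | p ∈ shell n (ℓ:ℤ) j ∧ p.1 ∈ coneDir n η (y ν)},
        ENNReal.ofReal (f (z.1 - p.1, z.2 - p.2))) ≤
      ENNReal.ofReal ((2:ℝ)^j * (2:ℝ)^(j - (ℓ:ℤ)) * (2:ℝ)^((j - (η:ℤ)) * ((n:ℤ) - 1)) *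
          (2:ℝ)^((η:ℤ) * ((n:ℤ) - 1))) * Meta n η y f z := by
  set c : ℝ := (2:ℝ)^j * (2:ℝ)^(j - (ℓ:ℤ)) * (2:ℝ)^((j - (η:ℤ)) * ((n:ℤ) - 1)) with hc
  have hc0 : (0:ℝ) < c := by rw [hc]; positivity
  have hcne : ENNReal.ofReal c ≠ 0 := by
    simp [ENNReal.ofReal_eq_zero, not_le, hc0]
  have hcnt : ENNReal.ofReal c ≠ ⊤ := ENNReal.ofReal_ne_top
  set d : ℝ := (2:ℝ)^((η:ℤ) * ((n:ℤ) - 1)) with hd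
  have hd0 : (0:ℝ) < d := by rw [hd]; positivity
  have hdne : ENNReal.ofReal d ≠ 0 := by
    simp [ENNReal.ofReal_eq_zero, not_le, hd0]
  have hdnt : ENNReal.ofReal d ≠ ⊤ := ENNReal.ofReal_ne_top
  have hterm : ∀ ν, (∫⁻ p in {p : Pt n | p ∈ shell n (ℓ:ℤ) j ∧ p.1 ∈ coneDir n η (y ν)},
      ENNReal.ofReal (f (z.1 - p.1, z.2 - p.2))) ≤ ENNReal.ofReal c * Mnu n η (y ν) f z := by
    intro ν
    have hle : (ENNReal.ofReal c)⁻¹ *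
        (∫⁻ p in {p : Pt n | p ∈ shell n (ℓ:ℤ) j ∧ p.1 ∈ coneDir n η (y ν)},
          ENNReal.ofReal (f (z.1 - p.1, z.2 - p.2))) ≤ Mnu n η (y ν) f z := by
      refine le_iSup_of_le ℓ (le_iSup_of_le hℓ (le_iSup_of_le j ?_))
      exact le_rfl
    exact (ENNReal.inv_mul_le_iff hcne hcnt).1 hle
  calc (∑ ν, ∫⁻ p in {p : Pt n | p ∈ shell n (ℓ:ℤ) j ∧ p.1 ∈ coneDir n η (y ν)},
        ENNReal.ofReal (f (z.1 - p.1, z.2 - p.2)))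
      ≤ ∑ ν, ENNReal.ofReal c * Mnu n η (y ν) f z :=
        Finset.sum_le_sum fun ν _ => hterm ν
    _ = ENNReal.ofReal c * ∑ ν, Mnu n η (y ν) f z := by rw [Finset.mul_sum]
    _ = ENNReal.ofReal c * (ENNReal.ofReal d * Meta n η y f z) := by
        congr 1
        rw [Meta, ← mul_assoc, ENNReal.mul_inv_cancel hdne hdnt, one_mul]
    _ = ENNReal.ofReal (c * d) * Meta n η y f z := by
        rw [ENNReal.ofReal_mul hc0.le, mul_assoc]
    _ = _ := by rw [hc, hd]

lemma Dlj_le_const_mul (n : ℕ) (hn : 1 ≤ n) (α : ℝ) (hα0 : 0 < α) (hαn : α ≤ n)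
    (ℓ j : ℤ) (f : Pt n → ℝ) (z : Pt n) :
    Dlj n α ℓ j f z ≤ ENNReal.ofReal (((2:ℝ)^j)^(α - n) * ((2:ℝ)^(j-ℓ))^(α/n - 1)) *
      ∫⁻ p in shell n ℓ j, ENNReal.ofReal (f (z.1 - p.1, z.2 - p.2)) := by
  have hn0 : (0:ℝ) < n := by exact_mod_cast Nat.pos_of_ne_zero (by omega)
  have hα1 : α/n - 1 ≤ 0 := by
    rw [sub_nonpos, div_le_one hn0]; exact hαn
  rw [Dlj, ← lintegral_const_mul' _ _ ENNReal.ofReal_ne_top]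
  refine setLIntegral_mono' (measurableSet_shell n ℓ j) fun p hp => ?_
  rw [mem_shell_iff] at hp
  obtain ⟨h1, h2, h3, h4⟩ := hp
  have hA0 : (0:ℝ) < (2:ℝ)^j := by positivity
  have hB0 : (0:ℝ) < (2:ℝ)^(j-ℓ) := by positivity
  have hbound : (|p.2| + ‖p.1‖) ^ (α - ↑n) * (|p.2| - ‖p.1‖) ^ (α / ↑n - 1) ≤
      ((2:ℝ)^j)^(α - ↑n) * ((2:ℝ)^(j-ℓ))^(α/↑n - 1) := by
    have hA : (|p.2| + ‖p.1‖) ^ (α - ↑n) ≤ ((2:ℝ)^j)^(α - ↑n) :=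
      Real.rpow_le_rpow_of_nonpos hA0 h1 (by linarith [hαn])
    have hB : (|p.2| - ‖p.1‖) ^ (α / ↑n - 1) ≤ ((2:ℝ)^(j-ℓ))^(α/↑n - 1) :=
      Real.rpow_le_rpow_of_nonpos hB0 h3 hα1
    exact mul_le_mul hA hB (Real.rpow_nonneg (by linarith) _) (Real.rpow_nonneg hA0.le _)
  calc ker n α f z p ≤ ENNReal.ofReal (f (z.1 - p.1, z.2 - p.2)) *
        ENNReal.ofReal (((2:ℝ)^j)^(α - ↑n) * ((2:ℝ)^(j-ℓ))^(α/↑n - 1)) := by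
        rw [ker]
        exact mul_le_mul_right (ENNReal.ofReal_le_ofReal hbound) _
    _ = _ := mul_comm _ _

end Stmt11Aux

set_option maxHeartbeats 1000000 in
theorem stmt11 (n : ℕ) (hn : 2 ≤ n) (α : ℝ) (hα0 : 0 < α) (hαn : α < n)
    (p q : ℝ) (hp : 1 < p) (hpq : p < q) (hform : α / n = 1 / p - 1 / q)
    (C₀ : ℝ) (hC₀ : 1 ≤ C₀) :
    ∃ C : ℝ≥0, 0 < C ∧ ∀ (η : ℕ), 1 ≤ η →
      ∀ (ι : Type) [Fintype ι] (y : ι → EuclideanSpace ℝ (Fin n)),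
      (∀ ν, ‖y ν‖ = 1) →
      (∀ w : EuclideanSpace ℝ (Fin n), w ≠ 0 → ∃ ν, w ∈ coneDir n η (y ν)) →
      ((Fintype.card ι : ℝ) ≤ C₀ * (2:ℝ) ^ ((η:ℤ) * ((n:ℤ) - 1))) →
      ∀ f : Pt n → ℝ, Measurable f → (∀ z, 0 ≤ f z) →
        MemLp f (ENNReal.ofReal p) volume → eLpNorm f (ENNReal.ofReal p) volume ≠ 0 →
      ∀ (ℓ : ℕ), ℓ ≤ η → ∀ (j : ℤ) (z : Pt n),
        0 < Meta n η y f z → Meta n η y f z < ⊤ → 0 < theta n p f (ℓ:ℤ) z →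
        ∀ ρ : ℝ,
          ENNReal.ofReal ((2:ℝ) ^ ((ρ * ((n:ℝ) + 1) - ℓ) / p)) =
            theta n p f (ℓ:ℤ) z ^ (1 / p) * eLpNorm f (ENNReal.ofReal p) volume /
              Meta n η y f z →
          Dlj n α (ℓ:ℤ) j f z ≤
            C * ENNReal.ofReal
                ((2:ℝ) ^ (-(|(j:ℝ) - ρ|) * ((n:ℝ) + 1) * min (α / n) (1 / q))) *
              theta n p f (ℓ:ℤ) z ^ (1 / p - 1 / q) * Meta n η y f z ^ (p / q) *
                eLpNorm f (ENNReal.ofReal p) volume ^ (1 - p / q) := by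
  classical
  have hn0 : (0:ℝ) < n := by exact_mod_cast (by omega : 0 < n)
  have hn0' : (n:ℝ) ≠ 0 := hn0.ne'
  have hp0 : (0:ℝ) < p := by linarith
  have hp0' : p ≠ 0 := hp0.ne'
  have hq1 : 1 < q := by linarith
  have hq0 : (0:ℝ) < q := by linarith
  have hq0' : q ≠ 0 := hq0.ne'
  have h1p : (0:ℝ) ≤ 1 - 1/p := by
    have h : 1/p ≤ 1 := by rw [div_le_one hp0]; linarith
    linarith
  have h1pq : (0:ℝ) ≤ 1 - p/q := by
    have h : p/q ≤ 1 := by rw [div_le_one hq0]; linarith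
    linarith
  have hαval : α = (n:ℝ) * (1/p - 1/q) := by
    rw [← hform]; field_simp
  set κ : ℝ≥0∞ := volume (Metric.ball (0 : EuclideanSpace ℝ (Fin n)) 1) with hκdef
  have hκt : κ ≠ ⊤ := measure_ball_lt_top.ne
  have hκpt : κ ^ (1 - 1/p) ≠ ⊤ := ENNReal.rpow_ne_top_of_nonneg h1p hκt
  have hCt : (2:ℝ≥0∞) * κ ^ (1 - 1/p) + 1 ≠ ⊤ :=
    ENNReal.add_ne_top.2 ⟨ENNReal.mul_ne_top ENNReal.ofNat_ne_top hκpt, ENNReal.one_ne_top⟩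
  refine ⟨((2:ℝ≥0∞) * κ ^ (1 - 1/p) + 1).toNNReal, ?_, ?_⟩
  · refine ENNReal.toNNReal_pos ?_ hCt
    have h : (0:ℝ≥0∞) < (2:ℝ≥0∞) * κ ^ (1 - 1/p) + 1 :=
      lt_of_lt_of_le zero_lt_one le_add_self
    exact h.ne'
  intro η hη ι instι y hunit hcov hcard f hf hfnn hmem hNzero ℓ hℓη j z hMpos hMlt hθpos ρ hρ
  have hCcoe : (((2:ℝ≥0∞) * κ ^ (1 - 1/p) + 1).toNNReal : ℝ≥0∞)
      = (2:ℝ≥0∞) * κ ^ (1 - 1/p) + 1 := ENNReal.coe_toNNReal hCt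
  set M := Meta n η y f z with hMdef
  set Nn := eLpNorm f (ENNReal.ofReal p) volume with hNdef
  set θ := theta n p f (ℓ:ℤ) z with hθdef
  set m := min (α / (n:ℝ)) (1/q) with hmdef
  set em := -|(j:ℝ) - ρ| * ((n:ℝ) + 1) * m with hemdef
  set R := ρ * ((n:ℝ) + 1) - (ℓ:ℝ) with hRdef
  have hM0 : M ≠ 0 := hMpos.ne'
  have hMt : M ≠ ⊤ := hMlt.ne
  have hNt : Nn ≠ ⊤ := hmem.2.ne
  have hNp0 : Nn ^ p ≠ 0 := (ENNReal.rpow_pos (pos_iff_ne_zero.2 hNzero) hNt).ne'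
  have hNpt : Nn ^ p ≠ ⊤ := ENNReal.rpow_ne_top_of_nonneg hp0.le hNt
  -- dyadic power conversion helpers
  have hofr : ∀ a : ℝ, ENNReal.ofReal ((2:ℝ) ^ a) = (2:ℝ≥0∞) ^ a := by
    intro a
    rw [← ENNReal.ofReal_rpow_of_pos two_pos, ENNReal.ofReal_ofNat]
  have hofz : ∀ a : ℤ, ENNReal.ofReal ((2:ℝ) ^ a) = (2:ℝ≥0∞) ^ ((a:ℝ)) := by
    intro a
    rw [← Real.rpow_intCast 2 a]
    exact hofr _
  have hofp : ∀ (a : ℤ) (b : ℝ), ENNReal.ofReal (((2:ℝ) ^ a) ^ b) = (2:ℝ≥0∞) ^ ((a:ℝ) * b) := by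
    intro a b
    rw [← Real.rpow_intCast 2 a, ← Real.rpow_mul (by norm_num : (0:ℝ) ≤ 2)]
    exact hofr _
  have hmul : ∀ a b : ℝ, (2:ℝ≥0∞) ^ a * (2:ℝ≥0∞) ^ b = (2:ℝ≥0∞) ^ (a + b) := by
    intro a b
    exact (ENNReal.rpow_add a b two_ne_zero ENNReal.ofNat_ne_top).symm
  -- theta relation
  have hθint : (∫⁻ w in Lam n (ℓ:ℤ), ENNReal.ofReal (f (z.1 - w.1, z.2 - w.2)) ^ p)
      = θ * Nn ^ p := by
    rw [hθdef, theta, hNdef]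
    exact (ENNReal.div_mul_cancel hNp0 hNpt).symm
  have hshellp : (∫⁻ w in shell n (ℓ:ℤ) j, ENNReal.ofReal (f (z.1 - w.1, z.2 - w.2)) ^ p)
      ≤ θ * Nn ^ p :=
    hθint ▸ lintegral_mono_set (Stmt11Aux.shell_subset_Lam n (ℓ:ℤ) j)
  have hshift : Measurable fun w : Pt n => f (z.1 - w.1, z.2 - w.2) := by
    apply hf.comp
    fun_prop
  have hg : Measurable fun w : Pt n => ENNReal.ofReal (f (z.1 - w.1, z.2 - w.2)) :=
    ENNReal.measurable_ofReal.comp hshift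
  -- relation from the definition of ρ
  have hGm : (2:ℝ≥0∞) ^ (R / p) * M = θ ^ (1/p) * Nn := by
    rw [← hofr (R/p), hρ, ENNReal.div_mul_cancel hM0 hMt]
  -- constants conversion
  have hc1 : ENNReal.ofReal (((2:ℝ)^j)^(α - (n:ℝ)) * ((2:ℝ)^(j - (ℓ:ℤ)))^(α/(n:ℝ) - 1))
      = (2:ℝ≥0∞) ^ ((j:ℝ)*(α - (n:ℝ)) + ((j:ℝ) - (ℓ:ℝ))*(α/(n:ℝ) - 1)) := by
    rw [ENNReal.ofReal_mul (by positivity), hofp, hofp, hmul]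
    congr 1
    push_cast
    ring
  have hc2 : ENNReal.ofReal ((2:ℝ)^j * (2:ℝ)^(j - (ℓ:ℤ)) * (2:ℝ)^((j - (η:ℤ)) * ((n:ℤ) - 1)) *
        (2:ℝ)^((η:ℤ) * ((n:ℤ) - 1)))
      = (2:ℝ≥0∞) ^ ((j:ℝ) + ((j:ℝ) - (ℓ:ℝ)) + ((j:ℝ) - (η:ℝ)) * ((n:ℝ) - 1)
          + (η:ℝ) * ((n:ℝ) - 1)) := by
    rw [ENNReal.ofReal_mul (by positivity), ENNReal.ofReal_mul (by positivity),
      ENNReal.ofReal_mul (by positivity), hofz, hofz, hofz, hofz, hmul, hmul, hmul]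
    congr 1
    push_cast
    ring
  have hc3 : ENNReal.ofReal ((2:ℝ)^(j * (n:ℤ)) * (2:ℝ)^(j - (ℓ:ℤ) + 1))
      = (2:ℝ≥0∞) ^ ((j:ℝ)*(n:ℝ) + ((j:ℝ) - (ℓ:ℝ) + 1)) := by
    rw [ENNReal.ofReal_mul (by positivity), hofz, hofz, hmul]
    congr 1
    push_cast
    ring
  -- Bound A : via the maximal function
  have hL1 : (∫⁻ w in shell n (ℓ:ℤ) j, ENNReal.ofReal (f (z.1 - w.1, z.2 - w.2)))
      ≤ ENNReal.ofReal ((2:ℝ)^j * (2:ℝ)^(j - (ℓ:ℤ)) * (2:ℝ)^((j - (η:ℤ)) * ((n:ℤ) - 1)) *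
          (2:ℝ)^((η:ℤ) * ((n:ℤ) - 1))) * M :=
    le_trans
      (Stmt11Aux.lintegral_shell_le_sum n η (by omega) y hcov (ℓ:ℤ) j
        (fun w => ENNReal.ofReal (f (z.1 - w.1, z.2 - w.2))))
      (Stmt11Aux.sum_cone_integrals_le n η y f z ℓ hℓη j)
  have hA : Dlj n α (ℓ:ℤ) j f z ≤
      (2:ℝ≥0∞) ^ (((j:ℝ)*(α - (n:ℝ)) + ((j:ℝ) - (ℓ:ℝ))*(α/(n:ℝ) - 1))
        + ((j:ℝ) + ((j:ℝ) - (ℓ:ℝ)) + ((j:ℝ) - (η:ℝ)) * ((n:ℝ) - 1)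
          + (η:ℝ) * ((n:ℝ) - 1))) * M := by
    refine le_trans (Stmt11Aux.Dlj_le_const_mul n (by omega) α hα0 hαn.le (ℓ:ℤ) j f z) ?_
    calc ENNReal.ofReal (((2:ℝ)^j)^(α - (n:ℝ)) * ((2:ℝ)^(j - (ℓ:ℤ)))^(α/(n:ℝ) - 1)) *
          (∫⁻ w in shell n (ℓ:ℤ) j, ENNReal.ofReal (f (z.1 - w.1, z.2 - w.2)))
        ≤ ENNReal.ofReal (((2:ℝ)^j)^(α - (n:ℝ)) * ((2:ℝ)^(j - (ℓ:ℤ)))^(α/(n:ℝ) - 1)) *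
          (ENNReal.ofReal ((2:ℝ)^j * (2:ℝ)^(j - (ℓ:ℤ)) * (2:ℝ)^((j - (η:ℤ)) * ((n:ℤ) - 1)) *
            (2:ℝ)^((η:ℤ) * ((n:ℤ) - 1))) * M) := mul_le_mul_right hL1 _
      _ = _ := by
          rw [hc1, hc2, ← mul_assoc, hmul]
  -- Bound B : via Hölder
  have hHold := Stmt11Aux.holder_set n hp (shell n (ℓ:ℤ) j)
    (g := fun w => ENNReal.ofReal (f (z.1 - w.1, z.2 - w.2))) hg.aemeasurable.restrict
  rw [Measure.restrict_apply_univ] at hHold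
  have hstep1 : (∫⁻ w in shell n (ℓ:ℤ) j, ENNReal.ofReal (f (z.1 - w.1, z.2 - w.2)) ^ p) ^ (1/p)
      ≤ θ ^ (1/p) * Nn := by
    calc (∫⁻ w in shell n (ℓ:ℤ) j, ENNReal.ofReal (f (z.1 - w.1, z.2 - w.2)) ^ p) ^ (1/p)
        ≤ (θ * Nn ^ p) ^ (1/p) := ENNReal.rpow_le_rpow hshellp (by positivity)
      _ = θ ^ (1/p) * Nn := by
          rw [ENNReal.mul_rpow_of_nonneg _ _ (by positivity), ← ENNReal.rpow_mul,
            mul_one_div_cancel hp0', ENNReal.rpow_one]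
  have hstep2 : (volume (shell n (ℓ:ℤ) j)) ^ (1 - 1/p)
      ≤ κ ^ (1 - 1/p) * (2:ℝ≥0∞) ^ (((j:ℝ)*(n:ℝ) + ((j:ℝ) - (ℓ:ℝ) + 1)) * (1 - 1/p)) := by
    calc (volume (shell n (ℓ:ℤ) j)) ^ (1 - 1/p)
        ≤ (κ * ENNReal.ofReal ((2:ℝ)^(j * (n:ℤ)) * (2:ℝ)^(j - (ℓ:ℤ) + 1))) ^ (1 - 1/p) :=
          ENNReal.rpow_le_rpow
            (Stmt11Aux.volume_shell_le n (by omega) (ℓ:ℤ) j (Int.natCast_nonneg ℓ)) h1p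
      _ = _ := by
          rw [ENNReal.mul_rpow_of_nonneg _ _ h1p, hc3, ← ENNReal.rpow_mul]
  have hB : Dlj n α (ℓ:ℤ) j f z ≤
      κ ^ (1 - 1/p) * (2:ℝ≥0∞) ^ ((((j:ℝ)*(α - (n:ℝ)) + ((j:ℝ) - (ℓ:ℝ))*(α/(n:ℝ) - 1)))
        + ((j:ℝ)*(n:ℝ) + ((j:ℝ) - (ℓ:ℝ) + 1)) * (1 - 1/p) + R/p) * M := by
    refine le_trans (Stmt11Aux.Dlj_le_const_mul n (by omega) α hα0 hαn.le (ℓ:ℤ) j f z) ?_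
    calc ENNReal.ofReal (((2:ℝ)^j)^(α - (n:ℝ)) * ((2:ℝ)^(j - (ℓ:ℤ)))^(α/(n:ℝ) - 1)) *
          (∫⁻ w in shell n (ℓ:ℤ) j, ENNReal.ofReal (f (z.1 - w.1, z.2 - w.2)))
        ≤ ENNReal.ofReal (((2:ℝ)^j)^(α - (n:ℝ)) * ((2:ℝ)^(j - (ℓ:ℤ)))^(α/(n:ℝ) - 1)) *
          ((θ ^ (1/p) * Nn) *
            (κ ^ (1 - 1/p) * (2:ℝ≥0∞) ^ (((j:ℝ)*(n:ℝ) + ((j:ℝ) - (ℓ:ℝ) + 1)) * (1 - 1/p)))) :=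
          mul_le_mul_right (le_trans hHold (mul_le_mul' hstep1 hstep2)) _
      _ = _ := by
          rw [hc1, ← hGm, show (((j:ℝ)*(α - (n:ℝ)) + ((j:ℝ) - (ℓ:ℝ))*(α/(n:ℝ) - 1)))
              + ((j:ℝ)*(n:ℝ) + ((j:ℝ) - (ℓ:ℝ) + 1)) * (1 - 1/p) + R/p
            = (((j:ℝ)*(α - (n:ℝ)) + ((j:ℝ) - (ℓ:ℝ))*(α/(n:ℝ) - 1))
              + (((j:ℝ)*(n:ℝ) + ((j:ℝ) - (ℓ:ℝ) + 1)) * (1 - 1/p) + R/p)) from by ring,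
            ← hmul ((j:ℝ)*(α - (n:ℝ)) + ((j:ℝ) - (ℓ:ℝ))*(α/(n:ℝ) - 1))
              (((j:ℝ)*(n:ℝ) + ((j:ℝ) - (ℓ:ℝ) + 1)) * (1 - 1/p) + R/p),
            ← hmul (((j:ℝ)*(n:ℝ) + ((j:ℝ) - (ℓ:ℝ) + 1)) * (1 - 1/p)) (R/p)]
          ring
  -- rewrite the right-hand side
  have hsplit : θ ^ (1/p - 1/q) * Nn ^ (1 - p/q) = (θ ^ (1/p) * Nn) ^ (1 - p/q) := by
    rw [ENNReal.mul_rpow_of_nonneg _ _ h1pq, ← ENNReal.rpow_mul]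
    congr 2
    field_simp
  have hpow : (θ ^ (1/p) * Nn) ^ (1 - p/q)
      = (2:ℝ≥0∞) ^ (R/p * (1 - p/q)) * M ^ (1 - p/q) := by
    rw [← hGm, ENNReal.mul_rpow_of_nonneg _ _ h1pq, ← ENNReal.rpow_mul]
  have hMM : M ^ (p/q) * M ^ (1 - p/q) = M := by
    rw [← ENNReal.rpow_add _ _ hM0 hMt, show p/q + (1 - p/q) = 1 from by ring,
      ENNReal.rpow_one]
  have hRHS : (((2:ℝ≥0∞) * κ ^ (1 - 1/p) + 1).toNNReal : ℝ≥0∞) *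
        ENNReal.ofReal ((2:ℝ) ^ em) * θ ^ (1/p - 1/q) * M ^ (p/q) * Nn ^ (1 - p/q)
      = (((2:ℝ≥0∞) * κ ^ (1 - 1/p) + 1).toNNReal : ℝ≥0∞) *
        ((2:ℝ≥0∞) ^ (em + R/p * (1 - p/q)) * M) := by
    calc (((2:ℝ≥0∞) * κ ^ (1 - 1/p) + 1).toNNReal : ℝ≥0∞) *
          ENNReal.ofReal ((2:ℝ) ^ em) * θ ^ (1/p - 1/q) * M ^ (p/q) * Nn ^ (1 - p/q)
        = (((2:ℝ≥0∞) * κ ^ (1 - 1/p) + 1).toNNReal : ℝ≥0∞) * (2:ℝ≥0∞) ^ em *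
            ((θ ^ (1/p - 1/q) * Nn ^ (1 - p/q)) * M ^ (p/q)) := by rw [hofr]; ring
      _ = (((2:ℝ≥0∞) * κ ^ (1 - 1/p) + 1).toNNReal : ℝ≥0∞) * (2:ℝ≥0∞) ^ em *
            (((2:ℝ≥0∞) ^ (R/p * (1 - p/q)) * M ^ (1 - p/q)) * M ^ (p/q)) := by
          rw [hsplit, hpow]
      _ = (((2:ℝ≥0∞) * κ ^ (1 - 1/p) + 1).toNNReal : ℝ≥0∞) *
            (((2:ℝ≥0∞) ^ em * (2:ℝ≥0∞) ^ (R/p * (1 - p/q))) * (M ^ (p/q) * M ^ (1 - p/q))) := by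
          ring
      _ = _ := by rw [hmul, hMM]
  refine le_trans ?_ hRHS.symm.le
  -- now prove Dlj ≤ C * (2 ^ (em + R/p * (1-p/q)) * M)
  have h1C : (1:ℝ≥0∞) ≤ (((2:ℝ≥0∞) * κ ^ (1 - 1/p) + 1).toNNReal : ℝ≥0∞) := by
    rw [hCcoe]; exact le_add_self
  rcases le_total ((j:ℝ)) ρ with hcase | hcase
  · -- case j ≤ ρ : use bound A
    have habs : |(j:ℝ) - ρ| = ρ - (j:ℝ) := by
      rw [abs_of_nonpos (by linarith)]; ring
    have hkey : (0:ℝ) ≤ (ρ - (j:ℝ)) * ((n:ℝ) + 1) * (α/(n:ℝ) - m) := by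
      apply mul_nonneg (mul_nonneg (by linarith) (by positivity))
      have h := min_le_left (α/(n:ℝ)) (1/q)
      rw [← hmdef] at h
      linarith
    have hexp : (((j:ℝ)*(α - (n:ℝ)) + ((j:ℝ) - (ℓ:ℝ))*(α/(n:ℝ) - 1))
        + ((j:ℝ) + ((j:ℝ) - (ℓ:ℝ)) + ((j:ℝ) - (η:ℝ)) * ((n:ℝ) - 1)
          + (η:ℝ) * ((n:ℝ) - 1))) ≤ em + R/p * (1 - p/q) := by
      have hid : em + R/p * (1 - p/q)
          - (((j:ℝ)*(α - (n:ℝ)) + ((j:ℝ) - (ℓ:ℝ))*(α/(n:ℝ) - 1))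
            + ((j:ℝ) + ((j:ℝ) - (ℓ:ℝ)) + ((j:ℝ) - (η:ℝ)) * ((n:ℝ) - 1)
              + (η:ℝ) * ((n:ℝ) - 1)))
          = (ρ - (j:ℝ)) * ((n:ℝ) + 1) * (α/(n:ℝ) - m) := by
        rw [hemdef, habs, hRdef, hαval]
        field_simp
        ring
      linarith
    calc Dlj n α (ℓ:ℤ) j f z
        ≤ (2:ℝ≥0∞) ^ (((j:ℝ)*(α - (n:ℝ)) + ((j:ℝ) - (ℓ:ℝ))*(α/(n:ℝ) - 1))
            + ((j:ℝ) + ((j:ℝ) - (ℓ:ℝ)) + ((j:ℝ) - (η:ℝ)) * ((n:ℝ) - 1)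
              + (η:ℝ) * ((n:ℝ) - 1))) * M := hA
      _ ≤ (2:ℝ≥0∞) ^ (em + R/p * (1 - p/q)) * M :=
          mul_le_mul_left (ENNReal.rpow_le_rpow_of_exponent_le one_le_two hexp) _
      _ ≤ _ := le_mul_of_one_le_left (by positivity) h1C
  · -- case ρ ≤ j : use bound B
    have habs : |(j:ℝ) - ρ| = (j:ℝ) - ρ := abs_of_nonneg (by linarith)
    have hkey : (0:ℝ) ≤ ((j:ℝ) - ρ) * ((n:ℝ) + 1) * (1/q - m) := by
      apply mul_nonneg (mul_nonneg (by linarith) (by positivity))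
      have h := min_le_right (α/(n:ℝ)) (1/q)
      rw [← hmdef] at h
      linarith
    have hup : (0:ℝ) < 1/p := by positivity
    have hexp : (((j:ℝ)*(α - (n:ℝ)) + ((j:ℝ) - (ℓ:ℝ))*(α/(n:ℝ) - 1))
        + ((j:ℝ)*(n:ℝ) + ((j:ℝ) - (ℓ:ℝ) + 1)) * (1 - 1/p) + R/p)
        ≤ em + R/p * (1 - p/q) + 1 := by
      have hid : (em + R/p * (1 - p/q) + 1)
          - ((((j:ℝ)*(α - (n:ℝ)) + ((j:ℝ) - (ℓ:ℝ))*(α/(n:ℝ) - 1))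
            + ((j:ℝ)*(n:ℝ) + ((j:ℝ) - (ℓ:ℝ) + 1)) * (1 - 1/p) + R/p))
          = ((j:ℝ) - ρ) * ((n:ℝ) + 1) * (1/q - m) + 1/p := by
        rw [hemdef, habs, hRdef, hαval]
        field_simp
        ring
      linarith
    calc Dlj n α (ℓ:ℤ) j f z
        ≤ κ ^ (1 - 1/p) * (2:ℝ≥0∞) ^ ((((j:ℝ)*(α - (n:ℝ)) + ((j:ℝ) - (ℓ:ℝ))*(α/(n:ℝ) - 1)))
            + ((j:ℝ)*(n:ℝ) + ((j:ℝ) - (ℓ:ℝ) + 1)) * (1 - 1/p) + R/p) * M := hB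
      _ ≤ κ ^ (1 - 1/p) * (2:ℝ≥0∞) ^ (em + R/p * (1 - p/q) + 1) * M :=
          mul_le_mul_left
            (mul_le_mul_right (ENNReal.rpow_le_rpow_of_exponent_le one_le_two hexp) _) _
      _ = ((2:ℝ≥0∞) * κ ^ (1 - 1/p)) * ((2:ℝ≥0∞) ^ (em + R/p * (1 - p/q)) * M) := by
          rw [ENNReal.rpow_add _ _ two_ne_zero ENNReal.ofNat_ne_top, ENNReal.rpow_one]
          ring
      _ ≤ _ := by
          refine mul_le_mul_left ?_ _
          rw [hCcoe]
          exact self_le_add_right _ _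

end
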